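/- There exists a commutative Noetherian ring R and an element r ∈ R such that the principal ideal Rr is not a w-ideal of R; i.e., there is a GV-ideal J of R and s ∈ R with Js ⊆ Rr but s ∉ Rr. Concretely, R = Q[x1,x2,r,a,b,c,d]/⟨cr − ax1, cx2 − d − bx1, rd, ax2 − br, ca − rx1, r² − a², rx2 − ab⟩ with J generated by the images of x1, x2 works. -/

import Mathlib

open MvPolynomial

/-- A finitely generated ideal `J` is a GV-ideal if the natural map
`R → Hom_R(J, R)`, `r ↦ (j ↦ r * j)`, is an isomorphism (bijective). -/
def IsGV (R : Type*) [CommRing R] (J : Ideal R) : Prop :=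
  J.FG ∧ Function.Bijective fun r : R => (LinearMap.lsmul R R r).comp J.subtype

noncomputable abbrev ExP : Type := MvPolynomial (Fin 7) ℚ

noncomputable abbrev ex1 : ExP := X 0
noncomputable abbrev ex2 : ExP := X 1
noncomputable abbrev er : ExP := X 2
noncomputable abbrev ea : ExP := X 3
noncomputable abbrev eb : ExP := X 4
noncomputable abbrev ec : ExP := X 5
noncomputable abbrev ed : ExP := X 6

noncomputable abbrev ExI : Ideal ExP :=
  Ideal.span {ec*er - ea*ex1, ec*ex2 - ed - eb*ex1, er*ed, ea*ex2 - eb*er,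
    ec*ea - er*ex1, er^2 - ea^2, er*ex2 - ea*eb}

noncomputable abbrev ExR : Type := ExP ⧸ ExI

namespace ExWitness

noncomputable abbrev Q4 : Type := MvPolynomial (Fin 4) ℚ
noncomputable abbrev Q3 : Type := MvPolynomial (Fin 3) ℚ

noncomputable def i4 : Q4 →ₐ[ℚ] ExP := aeval ![ex1, ex2, eb, ec]
noncomputable def i3 : Q3 →ₐ[ℚ] ExP := aeval ![ex1, ex2, ea]

/-- generator membership -/
lemma g1 : ec*er - ea*ex1 ∈ ExI := Ideal.subset_span (by simp)
lemma g2 : ec*ex2 - ed - eb*ex1 ∈ ExI := Ideal.subset_span (by simp)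
lemma g4 : ea*ex2 - eb*er ∈ ExI := Ideal.subset_span (by simp)
lemma g5 : ec*ea - er*ex1 ∈ ExI := Ideal.subset_span (by simp)
lemma g6 : er^2 - ea^2 ∈ ExI := Ideal.subset_span (by simp)
lemma g7 : er*ex2 - ea*eb ∈ ExI := Ideal.subset_span (by simp)

lemma mem_of_eq {p q : ExP} (h : q ∈ ExI) (e : p = q) : p ∈ ExI := e ▸ h

lemma m_ab : ea*eb - er*ex2 ∈ ExI := mem_of_eq (neg_mem g7) (by ring)
lemma m_rb : er*eb - ea*ex2 ∈ ExI := mem_of_eq (neg_mem g4) (by ring)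
lemma m_ac : ea*ec - er*ex1 ∈ ExI := mem_of_eq g5 (by ring)
lemma m_rc : er*ec - ea*ex1 ∈ ExI := mem_of_eq g1 (by ring)
lemma m_rr : er*er - ea*ea ∈ ExI := mem_of_eq g6 (by ring)
lemma m_d : ed - (ec*ex2 - eb*ex1) ∈ ExI := mem_of_eq (neg_mem g2) (by ring)

noncomputable def nf (F : Q4) (P Q : Q3) : ExP := i4 F + ea * i3 P + er * i3 Q

def HasNF (p : ExP) : Prop := ∃ F P Q, p - nf F P Q ∈ ExI

lemma hasNF_C (q : ℚ) : HasNF (MvPolynomial.C q) :=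
  ⟨MvPolynomial.C q, 0, 0, by simp [nf, i4, i3]⟩

lemma hasNF_add {p q : ExP} (hp : HasNF p) (hq : HasNF q) : HasNF (p + q) := by
  obtain ⟨F1, P1, Q1, h1⟩ := hp
  obtain ⟨F2, P2, Q2, h2⟩ := hq
  refine ⟨F1 + F2, P1 + P2, Q1 + Q2, mem_of_eq (Ideal.add_mem _ h1 h2) ?_⟩
  simp only [nf, map_add]; ring

lemma hasNF_sub {p q : ExP} (hp : HasNF p) (hq : HasNF q) : HasNF (p - q) := by
  obtain ⟨F1, P1, Q1, h1⟩ := hp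
  obtain ⟨F2, P2, Q2, h2⟩ := hq
  refine ⟨F1 - F2, P1 - P2, Q1 - Q2, mem_of_eq (Ideal.sub_mem _ h1 h2) ?_⟩
  simp only [nf, map_sub]; ring

lemma hasNF_of_sub_mem {p q : ExP} (h : p - q ∈ ExI) (hq : HasNF q) : HasNF p := by
  obtain ⟨F, P, Q, h1⟩ := hq
  exact ⟨F, P, Q, mem_of_eq (Ideal.add_mem _ h h1) (by ring)⟩

/-- multiplication of `a·F` and `r·F` by the 4-variable part reduces. -/
lemma aux_mul (F : Q4) : ∃ u v : Q3,
    (ea * i4 F - (ea * i3 u + er * i3 v) ∈ ExI) ∧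
    (er * i4 F - (er * i3 u + ea * i3 v) ∈ ExI) := by
  induction F using MvPolynomial.induction_on with
  | C q => refine ⟨MvPolynomial.C q, 0, ?_, ?_⟩ <;> simp [i4, i3]
  | add p q hp hq =>
      obtain ⟨u1, v1, h1, h1'⟩ := hp
      obtain ⟨u2, v2, h2, h2'⟩ := hq
      exact ⟨u1 + u2, v1 + v2,
        mem_of_eq (Ideal.add_mem _ h1 h2) (by simp only [map_add]; ring),
        mem_of_eq (Ideal.add_mem _ h1' h2') (by simp only [map_add]; ring)⟩
  | mul_X p i hp =>
      obtain ⟨u, v, h1, h2⟩ := hp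
      fin_cases i
      · -- x1
        refine ⟨X 0 * u, X 0 * v, ?_, ?_⟩
        · exact mem_of_eq (Ideal.mul_mem_right ex1 _ h1)
            (by simp only [map_mul]; simp [i4, i3]; ring)
        · exact mem_of_eq (Ideal.mul_mem_right ex1 _ h2)
            (by simp only [map_mul]; simp [i4, i3]; ring)
      · -- x2
        refine ⟨X 1 * u, X 1 * v, ?_, ?_⟩
        · exact mem_of_eq (Ideal.mul_mem_right ex2 _ h1)
            (by simp only [map_mul]; simp [i4, i3]; ring)
        · exact mem_of_eq (Ideal.mul_mem_right ex2 _ h2)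
            (by simp only [map_mul]; simp [i4, i3]; ring)
      · -- b
        refine ⟨X 1 * v, X 1 * u, ?_, ?_⟩
        · refine mem_of_eq (Ideal.add_mem _ (Ideal.mul_mem_right eb _ h1)
            (Ideal.add_mem _ (Ideal.mul_mem_left _ (i3 u) m_ab)
              (Ideal.mul_mem_left _ (i3 v) m_rb))) ?_
          simp only [map_mul]; simp [i4, i3]; ring
        · refine mem_of_eq (Ideal.add_mem _ (Ideal.mul_mem_right eb _ h2)
            (Ideal.add_mem _ (Ideal.mul_mem_left _ (i3 u) m_rb)
              (Ideal.mul_mem_left _ (i3 v) m_ab))) ?_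
          simp only [map_mul]; simp [i4, i3]; ring
      · -- c
        refine ⟨X 0 * v, X 0 * u, ?_, ?_⟩
        · refine mem_of_eq (Ideal.add_mem _ (Ideal.mul_mem_right ec _ h1)
            (Ideal.add_mem _ (Ideal.mul_mem_left _ (i3 u) m_ac)
              (Ideal.mul_mem_left _ (i3 v) m_rc))) ?_
          simp only [map_mul]; simp [i4, i3]; ring
        · refine mem_of_eq (Ideal.add_mem _ (Ideal.mul_mem_right ec _ h2)
            (Ideal.add_mem _ (Ideal.mul_mem_left _ (i3 u) m_rc)
              (Ideal.mul_mem_left _ (i3 v) m_ac))) ?_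
          simp only [map_mul]; simp [i4, i3]; ring

lemma hasNF_mul_x1 {p : ExP} (h : HasNF p) : HasNF (p * ex1) := by
  obtain ⟨F, P, Q, h⟩ := h
  exact ⟨F * X 0, X 0 * P, X 0 * Q, mem_of_eq (Ideal.mul_mem_right ex1 _ h)
    (by simp only [nf, map_mul]; simp [i4, i3]; ring)⟩

lemma hasNF_mul_x2 {p : ExP} (h : HasNF p) : HasNF (p * ex2) := by
  obtain ⟨F, P, Q, h⟩ := h
  exact ⟨F * X 1, X 1 * P, X 1 * Q, mem_of_eq (Ideal.mul_mem_right ex2 _ h)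
    (by simp only [nf, map_mul]; simp [i4, i3]; ring)⟩

lemma hasNF_mul_b {p : ExP} (h : HasNF p) : HasNF (p * eb) := by
  obtain ⟨F, P, Q, h⟩ := h
  refine ⟨F * X 2, X 1 * Q, X 1 * P, ?_⟩
  refine mem_of_eq (Ideal.add_mem _ (Ideal.mul_mem_right eb _ h)
    (Ideal.add_mem _ (Ideal.mul_mem_left _ (i3 P) m_ab)
      (Ideal.mul_mem_left _ (i3 Q) m_rb))) ?_
  simp only [nf, map_mul]; simp [i4, i3]; ring

lemma hasNF_mul_c {p : ExP} (h : HasNF p) : HasNF (p * ec) := by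
  obtain ⟨F, P, Q, h⟩ := h
  refine ⟨F * X 3, X 0 * Q, X 0 * P, ?_⟩
  refine mem_of_eq (Ideal.add_mem _ (Ideal.mul_mem_right ec _ h)
    (Ideal.add_mem _ (Ideal.mul_mem_left _ (i3 P) m_ac)
      (Ideal.mul_mem_left _ (i3 Q) m_rc))) ?_
  simp only [nf, map_mul]; simp [i4, i3]; ring

lemma hasNF_mul_a {p : ExP} (h : HasNF p) : HasNF (p * ea) := by
  obtain ⟨F, P, Q, h⟩ := h
  obtain ⟨u, v, h1, _⟩ := aux_mul F
  refine ⟨0, u + X 2 * P, v + X 2 * Q, ?_⟩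
  refine mem_of_eq (Ideal.add_mem _ (Ideal.mul_mem_right ea _ h) h1) ?_
  simp only [nf, map_add, map_mul, map_zero]; simp [i3]; ring

lemma hasNF_mul_r {p : ExP} (h : HasNF p) : HasNF (p * er) := by
  obtain ⟨F, P, Q, h⟩ := h
  obtain ⟨u, v, _, h2⟩ := aux_mul F
  refine ⟨0, v + X 2 * Q, u + X 2 * P, ?_⟩
  refine mem_of_eq (Ideal.add_mem _ (Ideal.add_mem _ (Ideal.mul_mem_right er _ h) h2)
    (Ideal.mul_mem_left _ (i3 Q) m_rr)) ?_
  simp only [nf, map_add, map_mul, map_zero]; simp [i3]; ring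

lemma hasNF_mul_d {p : ExP} (h : HasNF p) : HasNF (p * ed) := by
  have hnf : HasNF (p * ec * ex2 - p * eb * ex1) :=
    hasNF_sub (hasNF_mul_x2 (hasNF_mul_c h)) (hasNF_mul_x1 (hasNF_mul_b h))
  refine hasNF_of_sub_mem ?_ hnf
  exact mem_of_eq (Ideal.mul_mem_left _ p m_d) (by ring)

lemma hasNF (p : ExP) : HasNF p := by
  induction p using MvPolynomial.induction_on with
  | C q => exact hasNF_C q
  | add p q hp hq => exact hasNF_add hp hq
  | mul_X p i hp =>
      fin_cases i
      · exact hasNF_mul_x1 hp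
      · exact hasNF_mul_x2 hp
      · exact hasNF_mul_r hp
      · exact hasNF_mul_a hp
      · exact hasNF_mul_b hp
      · exact hasNF_mul_c hp
      · exact hasNF_mul_d hp

/-! ### Uniqueness of normal forms -/

noncomputable def f1 : ExP →ₐ[ℚ] Q4 :=
  aeval ![X 0, X 1, 0, 0, X 2, X 3, X 3 * X 1 - X 2 * X 0]
noncomputable def f2 : ExP →ₐ[ℚ] Q3 := aeval ![X 0, X 1, X 2, X 2, X 1, X 0, 0]
noncomputable def f3 : ExP →ₐ[ℚ] Q3 := aeval ![X 0, X 1, X 2, -X 2, -X 1, -X 0, 0]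
noncomputable def sg : Q3 →ₐ[ℚ] Q3 := aeval ![X 0, X 1, -X 2]

lemma f1_app (i : Fin 7) :
    f1 (X i) = ![X 0, X 1, 0, 0, X 2, X 3, X 3 * X 1 - X 2 * X 0] i := by
  simp only [f1, aeval_X]
lemma f2_app (i : Fin 7) : f2 (X i) = ![X 0, X 1, X 2, X 2, X 1, X 0, 0] i := by
  simp only [f2, aeval_X]
lemma f3_app (i : Fin 7) : f3 (X i) = ![X 0, X 1, X 2, -X 2, -X 1, -X 0, 0] i := by
  simp only [f3, aeval_X]

@[simp] lemma f1_x1 : f1 ex1 = X 0 := (f1_app 0).trans rfl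
@[simp] lemma f1_x2 : f1 ex2 = X 1 := (f1_app 1).trans rfl
@[simp] lemma f1_r : f1 er = 0 := (f1_app 2).trans rfl
@[simp] lemma f1_a : f1 ea = 0 := (f1_app 3).trans rfl
@[simp] lemma f1_b : f1 eb = X 2 := (f1_app 4).trans rfl
@[simp] lemma f1_c : f1 ec = X 3 := (f1_app 5).trans rfl
@[simp] lemma f1_d : f1 ed = X 3 * X 1 - X 2 * X 0 := (f1_app 6).trans rfl

@[simp] lemma f2_x1 : f2 ex1 = X 0 := (f2_app 0).trans rfl
@[simp] lemma f2_x2 : f2 ex2 = X 1 := (f2_app 1).trans rfl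
@[simp] lemma f2_r : f2 er = X 2 := (f2_app 2).trans rfl
@[simp] lemma f2_a : f2 ea = X 2 := (f2_app 3).trans rfl
@[simp] lemma f2_b : f2 eb = X 1 := (f2_app 4).trans rfl
@[simp] lemma f2_c : f2 ec = X 0 := (f2_app 5).trans rfl
@[simp] lemma f2_d : f2 ed = 0 := (f2_app 6).trans rfl

@[simp] lemma f3_x1 : f3 ex1 = X 0 := (f3_app 0).trans rfl
@[simp] lemma f3_x2 : f3 ex2 = X 1 := (f3_app 1).trans rfl
@[simp] lemma f3_r : f3 er = X 2 := (f3_app 2).trans rfl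
@[simp] lemma f3_a : f3 ea = -X 2 := (f3_app 3).trans rfl
@[simp] lemma f3_b : f3 eb = -X 1 := (f3_app 4).trans rfl
@[simp] lemma f3_c : f3 ec = -X 0 := (f3_app 5).trans rfl
@[simp] lemma f3_d : f3 ed = 0 := (f3_app 6).trans rfl

lemma f1_vanish {p : ExP} (h : p ∈ ExI) : f1 p = 0 := by
  have hk : ExI ≤ RingHom.ker f1.toRingHom := by
    rw [Ideal.span_le]
    rintro q hq
    simp only [Set.mem_insert_iff, Set.mem_singleton_iff] at hq
    rcases hq with rfl|rfl|rfl|rfl|rfl|rfl|rfl <;>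
      · simp only [SetLike.mem_coe, RingHom.mem_ker, AlgHom.toRingHom_eq_coe,
          RingHom.coe_coe, map_sub, map_mul, map_pow,
          f1_x1, f1_x2, f1_r, f1_a, f1_b, f1_c, f1_d]
        ring
  simpa using hk h

lemma f2_vanish {p : ExP} (h : p ∈ ExI) : f2 p = 0 := by
  have hk : ExI ≤ RingHom.ker f2.toRingHom := by
    rw [Ideal.span_le]
    rintro q hq
    simp only [Set.mem_insert_iff, Set.mem_singleton_iff] at hq
    rcases hq with rfl|rfl|rfl|rfl|rfl|rfl|rfl <;>
      · simp only [SetLike.mem_coe, RingHom.mem_ker, AlgHom.toRingHom_eq_coe,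
          RingHom.coe_coe, map_sub, map_mul, map_pow,
          f2_x1, f2_x2, f2_r, f2_a, f2_b, f2_c, f2_d]
        ring
  simpa using hk h

lemma f3_vanish {p : ExP} (h : p ∈ ExI) : f3 p = 0 := by
  have hk : ExI ≤ RingHom.ker f3.toRingHom := by
    rw [Ideal.span_le]
    rintro q hq
    simp only [Set.mem_insert_iff, Set.mem_singleton_iff] at hq
    rcases hq with rfl|rfl|rfl|rfl|rfl|rfl|rfl <;>
      · simp only [SetLike.mem_coe, RingHom.mem_ker, AlgHom.toRingHom_eq_coe,
          RingHom.coe_coe, map_sub, map_mul, map_pow,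
          f3_x1, f3_x2, f3_r, f3_a, f3_b, f3_c, f3_d]
        ring
  simpa using hk h

lemma f1_i4 (F : Q4) : f1 (i4 F) = F := by
  have h : f1.comp i4 = AlgHom.id ℚ Q4 := by
    apply MvPolynomial.algHom_ext
    intro i
    fin_cases i <;> simp [i4]
  calc f1 (i4 F) = (f1.comp i4) F := rfl
  _ = F := by rw [h]; rfl

lemma f2_i3 (P : Q3) : f2 (i3 P) = P := by
  have h : f2.comp i3 = AlgHom.id ℚ Q3 := by
    apply MvPolynomial.algHom_ext
    intro i
    fin_cases i <;> simp [i3]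
  calc f2 (i3 P) = (f2.comp i3) P := rfl
  _ = P := by rw [h]; rfl

lemma f3_i3 (P : Q3) : f3 (i3 P) = sg P := by
  have h : f3.comp i3 = sg := by
    apply MvPolynomial.algHom_ext
    intro i
    fin_cases i <;> simp [i3, sg]
  calc f3 (i3 P) = (f3.comp i3) P := rfl
  _ = sg P := by rw [h]

lemma sg_sg (P : Q3) : sg (sg P) = P := by
  have h : sg.comp sg = AlgHom.id ℚ Q3 := by
    apply MvPolynomial.algHom_ext
    intro i
    fin_cases i <;> simp [sg]
  calc sg (sg P) = (sg.comp sg) P := rfl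
  _ = P := by rw [h]; rfl

lemma key {F : Q4} {P Q : Q3} (h : nf F P Q ∈ ExI) : F = 0 ∧ P = 0 ∧ Q = 0 := by
  have hF : F = 0 := by
    have h1 := f1_vanish h
    simp only [nf, map_add, map_mul, f1_i4, f1_a, f1_r, zero_mul, add_zero] at h1
    exact h1
  subst hF
  have h2 := f2_vanish h
  have h3 := f3_vanish h
  simp only [nf, map_add, map_mul, map_zero, f2_i3, f2_a, f2_r, zero_add] at h2
  simp only [nf, map_add, map_mul, map_zero, f3_i3, f3_a, f3_r, zero_add] at h3
  have hPQ : P + Q = 0 := by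
    have e : (X 2 : Q3) * (P + Q) = 0 := by linear_combination h2
    rcases mul_eq_zero.mp e with h' | h'
    · exact absurd h' (MvPolynomial.X_ne_zero _)
    · exact h'
  have hQP : Q - P = 0 := by
    have e : (X 2 : Q3) * (sg Q - sg P) = 0 := by linear_combination h3
    rcases mul_eq_zero.mp e with h' | h'
    · exact absurd h' (MvPolynomial.X_ne_zero _)
    · have hsg : sg (Q - P) = 0 := by rw [map_sub]; exact h'
      have h5 := congrArg sg hsg
      rwa [sg_sg, map_zero] at h5
  have hP : P = 0 := add_self_eq_zero.mp (by linear_combination hPQ - hQP)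
  have hQ : Q = 0 := add_self_eq_zero.mp (by linear_combination hPQ + hQP)
  exact ⟨rfl, hP, hQ⟩

/-! ### Divisibility helpers -/

lemma prime_X0 {n : ℕ} : Prime (X 0 : MvPolynomial (Fin (n+1)) ℚ) := by
  rw [← MulEquiv.prime_iff (finSuccEquiv ℚ n).toMulEquiv]
  have h : (finSuccEquiv ℚ n).toMulEquiv (X 0) = Polynomial.X := finSuccEquiv_X_zero
  rw [h]
  exact Polynomial.prime_X

lemma dvd_of_mul_X1 {n : ℕ} {F G : MvPolynomial (Fin (n + 2)) ℚ}
    (h : F * X 1 = G * X 0) : ∃ F', F = X 0 * F' := by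
  have hd : (X 0 : MvPolynomial (Fin (n + 2)) ℚ) ∣ F * X 1 := ⟨G, by linear_combination h⟩
  rcases (prime_X0.2.2 F (X 1) hd) with h' | h'
  · obtain ⟨c, hc⟩ := h'
    exact ⟨c, hc⟩
  · rw [MvPolynomial.X_dvd_X] at h'
    exact absurd h' (by simp [Fin.ext_iff])

/-! ### Main structural lemmas -/

lemma nf_zero : nf 0 0 0 = 0 := by simp [nf]

lemma reg_x1 (t : ExR) (h : t * Ideal.Quotient.mk ExI ex1 = 0) : t = 0 := by
  obtain ⟨τ, rfl⟩ := Ideal.Quotient.mk_surjective t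
  rw [← map_mul, Ideal.Quotient.eq_zero_iff_mem] at h
  obtain ⟨F, P, Q, hnf⟩ := hasNF τ
  have h2 : nf (F * X 0) (P * X 0) (Q * X 0) ∈ ExI := by
    refine mem_of_eq (Ideal.sub_mem _ h (Ideal.mul_mem_right ex1 _ hnf)) ?_
    simp only [nf, map_mul]; simp [i4, i3]; ring
  obtain ⟨hF, hP, hQ⟩ := key h2
  have hF0 : F = 0 := by
    rcases mul_eq_zero.mp hF with h' | h'
    · exact h'
    · exact absurd h' (MvPolynomial.X_ne_zero _)
  have hP0 : P = 0 := by
    rcases mul_eq_zero.mp hP with h' | h'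
    · exact h'
    · exact absurd h' (MvPolynomial.X_ne_zero _)
  have hQ0 : Q = 0 := by
    rcases mul_eq_zero.mp hQ with h' | h'
    · exact h'
    · exact absurd h' (MvPolynomial.X_ne_zero _)
  rw [Ideal.Quotient.eq_zero_iff_mem]
  subst hF0; subst hP0; subst hQ0
  rw [nf_zero, sub_zero] at hnf
  exact hnf

lemma colon_x2 (u : ExR)
    (h : Ideal.Quotient.mk ExI ex2 * u ∈ Ideal.span {Ideal.Quotient.mk ExI ex1}) :
    u ∈ Ideal.span {Ideal.Quotient.mk ExI ex1} := by
  obtain ⟨τ, rfl⟩ := Ideal.Quotient.mk_surjective u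
  rw [Ideal.mem_span_singleton'] at h
  obtain ⟨w', hw⟩ := h
  obtain ⟨w, rfl⟩ := Ideal.Quotient.mk_surjective w'
  have hmem : τ * ex2 - w * ex1 ∈ ExI := by
    have e : Ideal.Quotient.mk ExI (τ * ex2) = Ideal.Quotient.mk ExI (w * ex1) := by
      rw [map_mul, map_mul, mul_comm (Ideal.Quotient.mk ExI τ)]
      exact hw.symm
    exact Ideal.Quotient.eq.mp e
  obtain ⟨F, P, Q, hτ⟩ := hasNF τ
  obtain ⟨G, S, T, hws⟩ := hasNF w
  have h2 : nf (F * X 1 - G * X 0) (P * X 1 - S * X 0) (Q * X 1 - T * X 0) ∈ ExI := by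
    refine mem_of_eq (Ideal.sub_mem _ (Ideal.sub_mem _ hmem
      (Ideal.mul_mem_right ex2 _ hτ)) (neg_mem (Ideal.mul_mem_right ex1 _ hws))) ?_
    simp only [nf, map_mul, map_sub]; simp [i4, i3]; ring
  obtain ⟨hF, hP, hQ⟩ := key h2
  obtain ⟨F', hF'⟩ := dvd_of_mul_X1 (sub_eq_zero.mp hF)
  obtain ⟨P', hP'⟩ := dvd_of_mul_X1 (sub_eq_zero.mp hP)
  obtain ⟨Q', hQ'⟩ := dvd_of_mul_X1 (sub_eq_zero.mp hQ)
  have hfac : τ - ex1 * nf F' P' Q' ∈ ExI := by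
    refine mem_of_eq hτ ?_
    rw [hF', hP', hQ']
    simp only [nf, map_mul]; simp [i4, i3]; ring
  rw [Ideal.mem_span_singleton']
  refine ⟨Ideal.Quotient.mk ExI (nf F' P' Q'), ?_⟩
  rw [← map_mul]
  exact (Ideal.Quotient.eq.mpr (mem_of_eq hfac (by ring))).symm

/-! ### `a ∉ (r)` via dual numbers -/

noncomputable def ψ : ExP →ₐ[ℚ] DualNumber ℚ :=
  aeval ![0, 0, 0, DualNumber.eps, 0, 0, 0]

lemma ψ_app (i : Fin 7) : ψ (X i) = ![0, 0, 0, DualNumber.eps, 0, 0, 0] i := by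
  simp only [ψ, aeval_X]

@[simp] lemma ψ_x1 : ψ ex1 = 0 := (ψ_app 0).trans rfl
@[simp] lemma ψ_x2 : ψ ex2 = 0 := (ψ_app 1).trans rfl
@[simp] lemma ψ_r : ψ er = 0 := (ψ_app 2).trans rfl
@[simp] lemma ψ_a : ψ ea = DualNumber.eps := (ψ_app 3).trans rfl
@[simp] lemma ψ_b : ψ eb = 0 := (ψ_app 4).trans rfl
@[simp] lemma ψ_c : ψ ec = 0 := (ψ_app 5).trans rfl
@[simp] lemma ψ_d : ψ ed = 0 := (ψ_app 6).trans rfl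

lemma ψ_vanish {p : ExP} (h : p ∈ ExI) : ψ p = 0 := by
  have hk : ExI ≤ RingHom.ker ψ.toRingHom := by
    rw [Ideal.span_le]
    rintro q hq
    simp only [Set.mem_insert_iff, Set.mem_singleton_iff] at hq
    rcases hq with rfl|rfl|rfl|rfl|rfl|rfl|rfl <;>
      · simp only [SetLike.mem_coe, RingHom.mem_ker, AlgHom.toRingHom_eq_coe,
          RingHom.coe_coe, map_sub, map_mul, map_pow,
          ψ_x1, ψ_x2, ψ_r, ψ_a, ψ_b, ψ_c, ψ_d]
        simp [pow_two, DualNumber.eps_mul_eps]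
  simpa using hk h

lemma a_notin_r :
    Ideal.Quotient.mk ExI ea ∉ Ideal.span {Ideal.Quotient.mk ExI er} := by
  intro h
  rw [Ideal.mem_span_singleton'] at h
  obtain ⟨w', hw⟩ := h
  obtain ⟨w, rfl⟩ := Ideal.Quotient.mk_surjective w'
  have hmem : w * er - ea ∈ ExI := Ideal.Quotient.eq.mp (by rw [map_mul]; exact hw)
  have := ψ_vanish hmem
  rw [map_sub, map_mul, ψ_r, ψ_a, mul_zero, zero_sub, neg_eq_zero] at this
  have h1 := congrArg TrivSqZeroExt.snd this
  rw [DualNumber.snd_eps, TrivSqZeroExt.snd_zero] at h1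
  exact one_ne_zero h1



/-! ### GV property and final assembly -/

noncomputable abbrev y1 : ExR := Ideal.Quotient.mk ExI ex1
noncomputable abbrev y2 : ExR := Ideal.Quotient.mk ExI ex2
noncomputable abbrev JJ : Ideal ExR := Ideal.span {y1, y2}

lemma hy1 : y1 ∈ JJ := Ideal.subset_span (by simp)
lemma hy2 : y2 ∈ JJ := Ideal.subset_span (by simp)

set_option maxHeartbeats 1000000 in
lemma isGV : IsGV ExR JJ := by
  constructor
  · exact Submodule.fg_span (Set.toFinite _)
  constructor
  · -- injectivity
    intro t1 t2 h
    have h1 := LinearMap.congr_fun h ⟨y1, hy1⟩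
    simp only [LinearMap.comp_apply, Submodule.coe_subtype, LinearMap.lsmul_apply,
      smul_eq_mul] at h1
    have h2 : (t1 - t2) * y1 = 0 := by linear_combination h1
    exact sub_eq_zero.mp (reg_x1 _ h2)
  · -- surjectivity
    intro φ
    set u1 := φ ⟨y1, hy1⟩ with hu1def
    set u2 := φ ⟨y2, hy2⟩ with hu2def
    have hsym : y2 * u1 = y1 * u2 := by
      have e1 : φ (y2 • (⟨y1, hy1⟩ : JJ)) = y2 • u1 := φ.map_smul y2 ⟨y1, hy1⟩
      have e2 : φ (y1 • (⟨y2, hy2⟩ : JJ)) = y1 • u2 := φ.map_smul y1 ⟨y2, hy2⟩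
      have e3 : y2 • (⟨y1, hy1⟩ : JJ) = y1 • (⟨y2, hy2⟩ : JJ) :=
        Subtype.ext (show y2 • y1 = y1 • y2 by
          rw [smul_eq_mul, smul_eq_mul, mul_comm])
      rw [e3, e2] at e1
      rw [smul_eq_mul, smul_eq_mul] at e1
      exact e1.symm
    have hu1mem : u1 ∈ Ideal.span {y1} := by
      apply colon_x2
      rw [hsym]
      exact Ideal.mem_span_singleton'.mpr ⟨u2, by ring⟩
    obtain ⟨t, ht⟩ := Ideal.mem_span_singleton'.mp hu1mem
    have hu2 : u2 = t * y2 := by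
      have h0 : (u2 - t * y2) * y1 = 0 := by linear_combination -hsym - y2 * ht
      exact sub_eq_zero.mp (reg_x1 _ h0)
    refine ⟨t, ?_⟩
    apply LinearMap.ext
    intro j
    obtain ⟨p, q, hpq⟩ := Ideal.mem_span_pair.mp j.2
    have hj : j = p • (⟨y1, hy1⟩ : JJ) + q • (⟨y2, hy2⟩ : JJ) :=
      Subtype.ext (show (j : ExR) = p • y1 + q • y2 by
        rw [smul_eq_mul, smul_eq_mul, hpq])
    have lhs : ((LinearMap.lsmul ExR ExR t).comp JJ.subtype) j = t * (p * y1 + q * y2) := by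
      simp only [LinearMap.comp_apply, Submodule.coe_subtype, LinearMap.lsmul_apply,
        smul_eq_mul]
      rw [← hpq]
    rw [lhs, hj, map_add, map_smul, map_smul, ← hu1def, ← hu2def, smul_eq_mul, smul_eq_mul]
    linear_combination p * ht - q * hu2

lemma mul_a_mem (j : ExR) (hj : j ∈ JJ) :
    j * Ideal.Quotient.mk ExI ea ∈ Ideal.span {Ideal.Quotient.mk ExI er} := by
  obtain ⟨p, q, hpq⟩ := Ideal.mem_span_pair.mp hj
  have h1 : y1 * Ideal.Quotient.mk ExI ea ∈ Ideal.span {Ideal.Quotient.mk ExI er} := by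
    have e : Ideal.Quotient.mk ExI (ex1 * ea) = Ideal.Quotient.mk ExI (ec * er) :=
      Ideal.Quotient.eq.mpr (mem_of_eq (neg_mem g1) (by ring))
    rw [← map_mul, e, map_mul]
    exact Ideal.mul_mem_left _ _ (Ideal.mem_span_singleton_self _)
  have h2 : y2 * Ideal.Quotient.mk ExI ea ∈ Ideal.span {Ideal.Quotient.mk ExI er} := by
    have e : Ideal.Quotient.mk ExI (ex2 * ea) = Ideal.Quotient.mk ExI (eb * er) :=
      Ideal.Quotient.eq.mpr (mem_of_eq g4 (by ring))
    rw [← map_mul, e, map_mul]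
    exact Ideal.mul_mem_left _ _ (Ideal.mem_span_singleton_self _)
  have e : j * Ideal.Quotient.mk ExI ea =
      p * (y1 * Ideal.Quotient.mk ExI ea) + q * (y2 * Ideal.Quotient.mk ExI ea) := by
    rw [← hpq]; ring
  rw [e]
  exact Ideal.add_mem _ (Ideal.mul_mem_left _ _ h1) (Ideal.mul_mem_left _ _ h2)

lemma noeth : IsNoetherianRing ExR := inferInstance

end ExWitness

theorem exists_noetherian_principal_not_wIdeal :
    (∃ (R : Type) (_ : CommRing R) (_ : IsNoetherianRing R) (r : R) (J : Ideal R) (s : R),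
      IsGV R J ∧ (∀ j ∈ J, j * s ∈ Ideal.span {r}) ∧ s ∉ Ideal.span {r}) ∧
    (IsNoetherianRing ExR ∧
      IsGV ExR (Ideal.span {Ideal.Quotient.mk ExI ex1, Ideal.Quotient.mk ExI ex2}) ∧
      ∃ s : ExR,
        (∀ j ∈ Ideal.span {Ideal.Quotient.mk ExI ex1, Ideal.Quotient.mk ExI ex2},
          j * s ∈ Ideal.span {Ideal.Quotient.mk ExI er}) ∧
        s ∉ Ideal.span {Ideal.Quotient.mk ExI er}) := by
  refine ⟨⟨ExR, inferInstance, ExWitness.noeth, Ideal.Quotient.mk ExI er, ExWitness.JJ,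
      Ideal.Quotient.mk ExI ea, ExWitness.isGV, ExWitness.mul_a_mem, ExWitness.a_notin_r⟩,
    ExWitness.noeth, ExWitness.isGV, Ideal.Quotient.mk ExI ea,
    ExWitness.mul_a_mem, ExWitness.a_notin_r⟩
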